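/- Main theorem, sufficiency direction: if in G^big any two individuals of the same agent type that lie in the same strongly connected component receive the same house type, then the allocation μ is rationalizable: there exists a strict type-preference profile ≿ with μ in the strong core. Moreover such a profile can be built by ordering the SCCs arbitrarily as S_1, ..., S_M and, processing SCCs in order, making each type's allocated house its highest not-yet-assigned preference position. -/

import Mathlib

/-- Arc of the allocation graph G^big: `(a,b)` is an arc iff `μ a = μE b`. -/
def arcBig {A H : Type*} (μE μ : A → H) (a b : A) : Prop := μ a = μE b

/-- Two agents lie in the same strongly connected component of G^big. -/
def sameSCC {A H : Type*} (μE μ : A → H) (a b : A) : Prop :=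
  Relation.ReflTransGen (arcBig μE μ) a b ∧ Relation.ReflTransGen (arcBig μE μ) b a

/-- For each house type, the number of agents allocated it equals the number endowed with it. -/
def BalancedAlloc {A H : Type*} (μE μ : A → H) : Prop :=
  ∀ h : H, Nat.card {a : A // μ a = h} = Nat.card {a : A // μE a = h}

/-- A directed cycle: a nonempty list of distinct vertices with consecutive arcs,
and an arc from the last vertex back to the first. A single vertex with a
self-loop is a cycle of length 1. -/
def IsCycle {V : Type*} (R : V → V → Prop) (l : List V) : Prop :=
  l ≠ [] ∧ l.Nodup ∧ l.Chain' R ∧ ∀ h : l ≠ [], R (l.getLast h) (l.head h)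

/-- A blocking coalition: a nonempty coalition `C` and a reallocation `μ'` of its
own endowments (as multisets) making every member weakly better off and at least
one member strictly better off, w.r.t. the strict type-preference profile `P`. -/
def Blocking {A H T : Type*} (tp : A → T) (μE μ : A → H)
    (P : T → LinearOrder H) : Prop :=
  ∃ (C : Finset A) (μ' : A → H),
    C.Nonempty ∧
    C.val.map μ' = C.val.map μE ∧
    (∀ a ∈ C, (P (tp a)).le (μ a) (μ' a)) ∧
    (∃ a ∈ C, (P (tp a)).lt (μ a) (μ' a))

/-- The allocation `μ` is rationalizable: some strict type-preference profile places
it in the strong core (no blocking coalition). -/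
def Rationalizable {A H T : Type*} (tp : A → T) (μE μ : A → H) : Prop :=
  ∃ P : T → LinearOrder H, ¬ Blocking tp μE μ P

set_option linter.unusedSectionVars false
open Classical Finset

section
variable {A H T : Type*} [Fintype A] [Fintype H] (μE μ : A → H) (tp : A → T)

lemma card_mu_eq (hbal : BalancedAlloc μE μ) (h : H) :
    (univ.filter (fun x : A => μ x = h)).card = (univ.filter (fun x : A => μE x = h)).card := by
  have := hbal h
  rwa [Nat.card_eq_fintype_card, Nat.card_eq_fintype_card, Fintype.card_subtype,
    Fintype.card_subtype] at this

lemma arc_rev (hbal : BalancedAlloc μE μ) {c d : A} (harc : arcBig μE μ c d) :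
    Relation.ReflTransGen (arcBig μE μ) d c := by
  classical
  set R : Finset A := univ.filter (fun x => Relation.ReflTransGen (arcBig μE μ) d x) with hR
  have hdR : d ∈ R := by
    simp only [hR, mem_filter, mem_univ, true_and]
    exact Relation.ReflTransGen.refl
  have hclosed : ∀ x ∈ R, ∀ y : A, μE y = μ x → y ∈ R := by
    intro x hx y hy
    simp only [hR, mem_filter, mem_univ, true_and] at hx ⊢
    exact hx.tail hy.symm
  have hfull : ∀ h : H, 0 < (R.filter (fun x => μ x = h)).card →
      R.filter (fun x => μE x = h) = univ.filter (fun x => μE x = h) := by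
    intro h hpos
    obtain ⟨x, hx⟩ := card_pos.mp hpos
    simp only [mem_filter] at hx
    apply Finset.Subset.antisymm (Finset.filter_subset_filter _ (subset_univ R))
    intro y hy
    simp only [mem_filter, mem_univ, true_and] at hy ⊢
    exact ⟨hclosed x hx.1 y (hy.trans hx.2.symm), hy⟩
  have hle : ∀ h : H, (R.filter (fun x => μ x = h)).card ≤ (R.filter (fun x => μE x = h)).card := by
    intro h
    rcases Nat.eq_zero_or_pos (R.filter (fun x => μ x = h)).card with h0 | hpos
    · omega
    · rw [hfull h hpos, ← card_mu_eq μE μ hbal]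
      exact card_le_card (filter_subset_filter _ (subset_univ R))
  have hsum1 : R.card = ∑ h : H, (R.filter (fun x => μ x = h)).card :=
    card_eq_sum_card_fiberwise (fun x _ => mem_univ (μ x))
  have hsum2 : R.card = ∑ h : H, (R.filter (fun x => μE x = h)).card :=
    card_eq_sum_card_fiberwise (fun x _ => mem_univ (μE x))
  have heq : ∀ h : H, (R.filter (fun x => μ x = h)).card = (R.filter (fun x => μE x = h)).card := by
    by_contra hne
    push_neg at hne
    obtain ⟨h0, hne0⟩ := hne
    have : ∑ h : H, (R.filter (fun x => μ x = h)).card < ∑ h : H, (R.filter (fun x => μE x = h)).card :=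
      Finset.sum_lt_sum (fun h _ => hle h) ⟨h0, mem_univ h0, lt_of_le_of_ne (hle h0) hne0⟩
    omega
  -- now h0 := μE d
  have hmpos : 0 < (R.filter (fun x => μE x = μE d)).card :=
    card_pos.mpr ⟨d, by simp [mem_filter, hdR]⟩
  have hnpos : 0 < (R.filter (fun x => μ x = μE d)).card := by rw [heq]; exact hmpos
  have hfull2 : R.filter (fun x => μ x = μE d) = univ.filter (fun x => μ x = μE d) := by
    apply Finset.eq_of_subset_of_card_le (Finset.filter_subset_filter _ (subset_univ R))
    rw [card_mu_eq μE μ hbal, ← hfull _ hnpos, ← heq]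
  have hcR : c ∈ R := by
    have : c ∈ R.filter (fun x => μ x = μE d) := by
      rw [hfull2]; simpa [mem_filter, arcBig] using harc
    exact (mem_filter.mp this).1
  simpa only [hR, mem_filter, mem_univ, true_and] using hcR

lemma reach_symm (hbal : BalancedAlloc μE μ) {a b : A}
    (h : Relation.ReflTransGen (arcBig μE μ) a b) :
    Relation.ReflTransGen (arcBig μE μ) b a := by
  induction h with
  | refl => exact Relation.ReflTransGen.refl
  | tail h1 h2 ih => exact (arc_rev μE μ hbal h2).trans ih

lemma arc_sameSCC' (hbal : BalancedAlloc μE μ) {a b : A} (h : arcBig μE μ a b) :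
    sameSCC μE μ a b :=
  ⟨Relation.ReflTransGen.single h, arc_rev μE μ hbal h⟩

lemma sameSCC_refl' (a : A) : sameSCC μE μ a a := ⟨.refl, .refl⟩
lemma sameSCC_symm' {a b : A} (h : sameSCC μE μ a b) : sameSCC μE μ b a := ⟨h.2, h.1⟩
lemma sameSCC_trans' {a b c : A} (h : sameSCC μE μ a b) (h' : sameSCC μE μ b c) :
    sameSCC μE μ a c := ⟨h.1.trans h'.1, h'.2.trans h.2⟩

lemma exists_mu' (hbal : BalancedAlloc μE μ) (b : A) : ∃ a : A, μ a = μE b := by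
  have : 0 < (univ.filter (fun x : A => μ x = μE b)).card := by
    rw [card_mu_eq μE μ hbal]
    exact card_pos.mpr ⟨b, by simp⟩
  obtain ⟨a, ha⟩ := card_pos.mp this
  exact ⟨a, (mem_filter.mp ha).2⟩

lemma exists_muE' (hbal : BalancedAlloc μE μ) (a : A) : ∃ b : A, μE b = μ a := by
  have : 0 < (univ.filter (fun x : A => μE x = μ a)).card := by
    rw [← card_mu_eq μE μ hbal]
    exact card_pos.mpr ⟨a, by simp⟩
  obtain ⟨b, hb⟩ := card_pos.mp this
  exact ⟨b, (mem_filter.mp hb).2⟩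

lemma sameSCC_of_muE_eq' (hbal : BalancedAlloc μE μ) {b b' : A} (h : μE b = μE b') :
    sameSCC μE μ b b' := by
  obtain ⟨a, ha⟩ := exists_mu' μE μ hbal b
  exact sameSCC_trans' μE μ (sameSCC_symm' μE μ (arc_sameSCC' μE μ hbal ha))
    (arc_sameSCC' μE μ hbal (ha.trans h))

lemma sameSCC_of_mu_eq' (hbal : BalancedAlloc μE μ) {a a' : A} (h : μ a = μ a') :
    sameSCC μE μ a a' := by
  obtain ⟨b, hb⟩ := exists_muE' μE μ hbal a
  exact sameSCC_trans' μE μ (arc_sameSCC' μE μ hbal hb.symm)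
    (sameSCC_symm' μE μ (arc_sameSCC' μE μ hbal (h.symm.trans hb.symm)))

noncomputable def idx (a : A) : ℕ :=
  ((univ.filter (fun x => sameSCC μE μ x a)).image (fun x => ((Fintype.equivFin A) x : ℕ))).min'
    (Finset.Nonempty.image ⟨a, by simp [sameSCC_refl']⟩ _)

lemma idx_lt_card (a : A) : idx μE μ a < Fintype.card A := by
  have := Finset.min'_mem _ (Finset.Nonempty.image (⟨a, by simp [sameSCC_refl']⟩ :
    (univ.filter (fun x => sameSCC μE μ x a)).Nonempty) (fun x => ((Fintype.equivFin A) x : ℕ)))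
  rw [Finset.mem_image] at this
  obtain ⟨x, _, hx⟩ := this
  rw [idx, ← hx]
  exact (Fintype.equivFin A x).isLt

lemma idx_congr {a b : A} (h : sameSCC μE μ a b) : idx μE μ a = idx μE μ b := by
  unfold idx
  congr 2
  ext x
  simp only [mem_filter, mem_univ, true_and]
  exact ⟨fun h' => sameSCC_trans' μE μ h' h, fun h' => sameSCC_trans' μE μ h' (sameSCC_symm' μE μ h)⟩

lemma sameSCC_of_idx_eq {a b : A} (h : idx μE μ a = idx μE μ b) : sameSCC μE μ a b := by
  have ha := Finset.min'_mem _ (Finset.Nonempty.image (⟨a, by simp [sameSCC_refl']⟩ :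
    (univ.filter (fun x => sameSCC μE μ x a)).Nonempty) (fun x => ((Fintype.equivFin A) x : ℕ)))
  have hb := Finset.min'_mem _ (Finset.Nonempty.image (⟨b, by simp [sameSCC_refl']⟩ :
    (univ.filter (fun x => sameSCC μE μ x b)).Nonempty) (fun x => ((Fintype.equivFin A) x : ℕ)))
  rw [Finset.mem_image] at ha hb
  obtain ⟨x, hx, hxv⟩ := ha
  obtain ⟨y, hy, hyv⟩ := hb
  simp only [mem_filter, mem_univ, true_and] at hx hy
  have hxy : x = y := by
    have : ((Fintype.equivFin A) x : ℕ) = ((Fintype.equivFin A) y : ℕ) := by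
      rw [hxv, hyv]; exact h
    exact (Fintype.equivFin A).injective (Fin.val_injective this)
  exact sameSCC_trans' μE μ (sameSCC_symm' μE μ hx) (hxy ▸ hy)

noncomputable def hidx (h : H) : ℕ :=
  if hx : ∃ b : A, μE b = h then idx μE μ hx.choose else 0

lemma hidx_muE (hbal : BalancedAlloc μE μ) (b : A) : hidx μE μ (μE b) = idx μE μ b := by
  have hx : ∃ b' : A, μE b' = μE b := ⟨b, rfl⟩
  rw [hidx, dif_pos hx]
  exact idx_congr μE μ (sameSCC_of_muE_eq' μE μ hbal hx.choose_spec)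


lemma hidx_mu (hbal : BalancedAlloc μE μ) (a : A) : hidx μE μ (μ a) = idx μE μ a := by
  have hx : ∃ b' : A, μE b' = μ a := exists_muE' μE μ hbal a
  rw [hidx, dif_pos hx]
  exact idx_congr μE μ (sameSCC_symm' μE μ (arc_sameSCC' μE μ hbal hx.choose_spec.symm))

noncomputable def cl (t : T) (h : H) : ℕ :=
  if hx : ∃ a : A, tp a = t ∧ μ a = h then idx μE μ hx.choose else Fintype.card A

lemma cl_spec (t : T) (h : H) (hlt : cl μE μ tp t h < Fintype.card A) :
    ∃ a' : A, tp a' = t ∧ μ a' = h ∧ idx μE μ a' = cl μE μ tp t h := by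
  by_cases hx : ∃ a : A, tp a = t ∧ μ a = h
  · exact ⟨hx.choose, hx.choose_spec.1, hx.choose_spec.2, by rw [cl, dif_pos hx]⟩
  · rw [cl, dif_neg hx] at hlt; omega

lemma cl_mu (hbal : BalancedAlloc μE μ) (a : A) : cl μE μ tp (tp a) (μ a) = idx μE μ a := by
  have hx : ∃ a' : A, tp a' = tp a ∧ μ a' = μ a := ⟨a, rfl, rfl⟩
  rw [cl, dif_pos hx]
  exact idx_congr μE μ (sameSCC_of_mu_eq' μE μ hbal hx.choose_spec.2)

noncomputable def key (t : T) (h : H) : ℕ ×ₗ ℕ :=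
  toLex (cl μE μ tp t h, ((Fintype.equivFin H) h : ℕ))

lemma key_inj (t : T) : Function.Injective (fun h => OrderDual.toDual (key μE μ tp t h)) := by
  intro x y hxy
  have hxy : key μE μ tp t x = key μE μ tp t y := OrderDual.toDual.injective hxy
  rw [key, key] at hxy
  have h2 : ((Fintype.equivFin H) x : ℕ) = ((Fintype.equivFin H) y : ℕ) := congrArg (fun p => (ofLex p).2) hxy
  exact (Fintype.equivFin H).injective (Fin.val_injective h2)

noncomputable def Pref (t : T) : LinearOrder H :=
  LinearOrder.lift' (fun h => OrderDual.toDual (key μE μ tp t h)) (key_inj μE μ tp t)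

lemma Pref_le_iff (t : T) (x y : H) : (Pref μE μ tp t).le x y ↔ key μE μ tp t y ≤ key μE μ tp t x :=
  Iff.rfl

lemma Pref_lt_iff (t : T) (x y : H) : (Pref μE μ tp t).lt x y ↔ key μE μ tp t y < key μE μ tp t x :=
  Iff.rfl

lemma pref_lt_hidx (hbal : BalancedAlloc μE μ)
    (hcond : ∀ a b : A, tp a = tp b → sameSCC μE μ a b → μ a = μ b)
    {a : A} {h : H} (hlt : (Pref μE μ tp (tp a)).lt (μ a) h) :
    hidx μE μ h < idx μE μ a := by
  rw [Pref_lt_iff] at hlt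
  rw [key, key, Prod.Lex.lt_iff] at hlt
  simp only [ofLex_toLex] at hlt
  rw [cl_mu μE μ tp hbal] at hlt
  rcases hlt with hlt | ⟨heq, hlt2⟩
  · obtain ⟨a', hta, hma, hia⟩ := cl_spec μE μ tp _ h (hlt.trans (idx_lt_card μE μ a))
    rw [← hma, hidx_mu μE μ hbal, hia]
    exact hlt
  · exfalso
    obtain ⟨a', hta, hma, hia⟩ := cl_spec μE μ tp _ h (heq ▸ idx_lt_card μE μ a)
    have hsame : sameSCC μE μ a' a := sameSCC_of_idx_eq μE μ (by rw [hia, heq])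
    have : h = μ a := by rw [← hma]; exact hcond a' a hta hsame
    rw [this] at hlt2
    omega

end

/-- sufficiency: if any two same-type agents in the same SCC of G^big
receive the same house type, then μ is rationalizable: there is a strict
type-preference profile placing μ in the strong core. -/
theorem stmt10 {A H T : Type*} [Fintype A] [Fintype H] (tp : A → T)
    (μE μ : A → H) (hbal : BalancedAlloc μE μ)
    (hcond : ∀ a b : A, tp a = tp b → sameSCC μE μ a b → μ a = μ b) :
    Rationalizable tp μE μ := by
  classical
  refine ⟨Pref μE μ tp, ?_⟩
  rintro ⟨C, μ', hCne, hmap, hweak, a0, ha0, hstrict⟩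
  have key : ∀ k : ℕ, ∀ a ∈ C, idx μE μ a < k → μ' a = μ a := by
    intro k
    induction k with
    | zero => omega
    | succ k ih =>
      intro a haC hak
      rcases Nat.lt_succ_iff_lt_or_eq.mp hak with hk | hk
      · exact ih a haC hk
      · by_contra hne
        have hlt : (Pref μE μ tp (tp a)).lt (μ a) (μ' a) := by
          rw [Pref_lt_iff]
          refine lt_of_le_of_ne ((Pref_le_iff μE μ tp (tp a) _ _).mp (hweak a haC)) ?_
          intro hkey
          exact hne (OrderDual.toDual.injective (key_inj μE μ tp (tp a)
            (congrArg OrderDual.toDual hkey)) ▸ rfl)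
        have h1 : hidx μE μ (μ' a) < k := hk ▸ pref_lt_hidx μE μ tp hbal hcond hlt
        set S1 := C.filter (fun b => idx μE μ b < k) with hS1
        set S2 := C.filter (fun b => hidx μE μ (μ' b) < k) with hS2
        have hsub : S1 ⊆ S2 := by
          intro b hb
          rw [hS1, Finset.mem_filter] at hb
          rw [hS2, Finset.mem_filter]
          refine ⟨hb.1, ?_⟩
          rw [ih b hb.1 hb.2, hidx_mu μE μ hbal]
          exact hb.2
        have hss : S1 ⊂ S2 := by
          refine ⟨hsub, fun hsup => ?_⟩
          have haS2 : a ∈ S2 := by rw [hS2, Finset.mem_filter]; exact ⟨haC, h1⟩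
          have haS1 := hsup haS2
          rw [hS1, Finset.mem_filter] at haS1
          omega
        have hcard : S1.card < S2.card := Finset.card_lt_card hss
        have hc2 : S2.card = Multiset.countP (fun h => hidx μE μ h < k) (C.val.map μ') := by
          rw [Multiset.countP_map]
          rw [hS2]
          rw [Finset.card, Finset.filter_val]
        have hc1 : S1.card = Multiset.countP (fun h => hidx μE μ h < k) (C.val.map μE) := by
          rw [Multiset.countP_map]
          have : C.filter (fun b => hidx μE μ (μE b) < k) = S1 := by
            rw [hS1]
            apply Finset.filter_congr
            intro b _
            rw [hidx_muE μE μ hbal]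
          rw [← this, Finset.card, Finset.filter_val]
        rw [hmap, ← hc1] at hc2
        omega
  have h0 := key (idx μE μ a0 + 1) a0 ha0 (Nat.lt_succ_self _)
  rw [h0] at hstrict
  rw [Pref_lt_iff] at hstrict
  exact lt_irrefl _ hstrict
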